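/- The number a_{2,3}(n) of compositions (c_1,...,c_m) of n with 2·c_{2i-1} > 3·c_{2i} for all i with 2i ≤ m equals the number of compositions of n into parts congruent to 1 or 3 modulo 5. -/

import Mathlib

/-- `l` is a composition of `n`: a list of positive integers summing to `n`. -/
def IsComposition (n : ℕ) (l : List ℕ) : Prop := (∀ x ∈ l, 0 < x) ∧ l.sum = n

/-- The scaled Arndt condition: `s * c_{2i-1} > t * c_{2i}` for each pair
(0-indexed: `s * l[2i] > t * l[2i+1]`). -/
def ArndtCond (s t : ℕ) (l : List ℕ) : Prop :=
  ∀ i : ℕ, 2 * i + 1 < l.length → t * l[2 * i + 1]! < s * l[2 * i]!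

/-- `a_{s,t}(n)`: the number of scaled Arndt compositions of `n`. -/
noncomputable def arndtCount (s t n : ℕ) : ℕ :=
  Nat.card {l : List ℕ // IsComposition n l ∧ ArndtCond s t l}

/-- Number of compositions of `n` with all parts in the set `A`. -/
noncomputable def compCount (A : Set ℕ) (n : ℕ) : ℕ :=
  Nat.card {l : List ℕ // IsComposition n l ∧ ∀ x ∈ l, x ∈ A}

/-! ### Auxiliary definitions and lemmas -/

instance compFinite (n : ℕ) (P : List ℕ → Prop) :
    Finite {l : List ℕ // IsComposition n l ∧ P l} := by
  apply Finite.of_injective (fun x => (⟨x.1, fun hi => x.2.1.1 _ hi, x.2.1.2⟩ : Composition n))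
  intro x y h
  exact Subtype.ext (congrArg Composition.blocks h)

lemma comp_zero_unique (P : List ℕ → Prop) (hP : P []) :
    Nat.card {l : List ℕ // IsComposition 0 l ∧ P l} = 1 := by
  have : Unique {l : List ℕ // IsComposition 0 l ∧ P l} := by
    refine ⟨⟨⟨[], ⟨by simp, by simp⟩, hP⟩⟩, ?_⟩
    rintro ⟨l, ⟨hpos, hsum⟩, hp⟩
    have : l = [] := by
      cases l with
      | nil => rfl
      | cons a t =>
        exfalso
        have ha : 0 < a := hpos a (by simp)
        simp at hsum; omega
    subst this; rfl
  exact Nat.card_unique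

lemma arndt_nil (s t : ℕ) : ArndtCond s t [] := by intro i h; simp at h

lemma arndt_single (s t c : ℕ) : ArndtCond s t [c] := by
  intro i h; simp at h

lemma arndt_cons_cons (s t c d : ℕ) (l : List ℕ) :
    ArndtCond s t (c :: d :: l) ↔ t * d < s * c ∧ ArndtCond s t l := by
  constructor
  · intro h
    refine ⟨by simpa using h 0 (by simp), ?_⟩
    intro i hi
    have := h (i + 1) (by simp; omega)
    have e1 : 2 * (i + 1) + 1 = (2 * i + 1) + 2 := by ring
    have e2 : 2 * (i + 1) = (2 * i) + 2 := by ring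
    rw [e1, e2] at this
    simpa [List.getElem!_cons_succ] using this
  · rintro ⟨h1, h2⟩ i hi
    match i with
    | 0 => simpa using h1
    | (j + 1) =>
      have e1 : 2 * (j + 1) + 1 = (2 * j + 1) + 2 := by ring
      have e2 : 2 * (j + 1) = (2 * j) + 2 := by ring
      rw [e1, e2]
      simp only [List.getElem!_cons_succ]
      apply h2
      simp at hi; omega

def Aset : Set ℕ := {x : ℕ | x % 5 = 1 ∨ x % 5 = 3}

def Tn (n : ℕ) : Finset (ℕ × ℕ) :=
  ((Finset.Icc 1 n) ×ˢ (Finset.Icc 1 n)).filter (fun p => 3 * p.2 < 2 * p.1 ∧ p.1 + p.2 ≤ n)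

def An (n : ℕ) : Finset ℕ := (Finset.Icc 1 n).filter (fun p => p % 5 = 1 ∨ p % 5 = 3)

def Mn (n : ℕ) : Finset ℕ := (Finset.Icc 3 n).filter (fun p => p % 5 = 1 ∨ p % 5 = 3)

lemma mem_Tn (n : ℕ) (p : ℕ × ℕ) :
    p ∈ Tn n ↔ 1 ≤ p.1 ∧ 1 ≤ p.2 ∧ 3 * p.2 < 2 * p.1 ∧ p.1 + p.2 ≤ n := by
  simp only [Tn, Finset.mem_filter, Finset.mem_product, Finset.mem_Icc]
  omega

lemma mem_An (n q : ℕ) : q ∈ An n ↔ 1 ≤ q ∧ q ≤ n ∧ (q % 5 = 1 ∨ q % 5 = 3) := by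
  simp only [An, Finset.mem_filter, Finset.mem_Icc]; tauto

lemma mem_Mn (n m : ℕ) : m ∈ Mn n ↔ 3 ≤ m ∧ m ≤ n ∧ (m % 5 = 1 ∨ m % 5 = 3) := by
  simp only [Mn, Finset.mem_filter, Finset.mem_Icc]; tauto

/-- First-part decomposition for compositions with parts in `Aset`. -/
lemma b_rec (n : ℕ) (hn : 1 ≤ n) :
    compCount Aset n = ∑ p ∈ An n, compCount Aset (n - p) := by
  classical
  set F : ℕ → Type := fun m => {l : List ℕ // IsComposition m l ∧ ∀ x ∈ l, x ∈ Aset} with hF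
  have key : Nat.card (F n) = Nat.card (Σ p : (An n), F (n - p.1)) := by
    apply Nat.card_congr
    refine (Equiv.ofBijective (fun x : Σ p : (An n), F (n - p.1) =>
      (⟨x.1.1 :: x.2.1, ?_, ?_⟩ : F n)) ⟨?_, ?_⟩).symm
    · obtain ⟨⟨p, hp⟩, ⟨l, ⟨hpos, hsum⟩, hA⟩⟩ := x
      simp only [An, Finset.mem_filter, Finset.mem_Icc] at hp
      constructor
      · intro y hy
        rcases List.mem_cons.mp hy with h | h
        · have : y = p := h; omega
        · exact hpos y h
      · have hsum' : l.sum = n - p := hsum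
        simp only [List.sum_cons, hsum']; omega
    · obtain ⟨⟨p, hp⟩, ⟨l, hc, hA⟩⟩ := x
      simp only [An, Finset.mem_filter, Finset.mem_Icc] at hp
      intro y hy
      rcases List.mem_cons.mp hy with h | h
      · subst h; exact hp.2
      · exact hA y h
    · rintro ⟨⟨p, hp⟩, ⟨l, hl⟩⟩ ⟨⟨q, hq⟩, ⟨m, hm⟩⟩ h
      simp only [Subtype.mk.injEq, List.cons.injEq] at h
      obtain ⟨h1, h2⟩ := h
      subst h1; subst h2; rfl
    · rintro ⟨l, ⟨hpos, hsum⟩, hA⟩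
      cases l with
      | nil => exfalso; simp at hsum; omega
      | cons a t =>
        have ha : a ∈ An n := by
          simp only [An, Finset.mem_filter, Finset.mem_Icc]
          have := hpos a (by simp)
          have hs : a + t.sum = n := by simpa using hsum
          exact ⟨⟨this, by omega⟩, hA a (by simp)⟩
        refine ⟨⟨⟨a, ha⟩, ⟨t, ⟨fun y hy => hpos y (by simp [hy]), ?_⟩,
          fun y hy => hA y (by simp [hy])⟩⟩, rfl⟩
        have hs : a + t.sum = n := by simpa using hsum
        show t.sum = n - a
        omega
  have step2 : Nat.card (Σ p : (An n), F (n - p.1)) = ∑ p ∈ An n, compCount Aset (n - p) := by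
    letI : ∀ p : (An n), Fintype (F (n - p.1)) := fun p => Fintype.ofFinite _
    rw [Nat.card_eq_fintype_card, Fintype.card_sigma]
    rw [← Finset.sum_coe_sort (An n) (fun p => compCount Aset (n - p))]
    congr 1
    ext p
    rw [compCount, Nat.card_eq_fintype_card]
  rw [compCount]
  rw [key, step2]

/-- First-pair decomposition for Arndt compositions. -/
lemma a_rec (n : ℕ) (hn : 1 ≤ n) :
    arndtCount 2 3 n = 1 + ∑ p ∈ Tn n, arndtCount 2 3 (n - (p.1 + p.2)) := by
  classical
  set G : ℕ → Type := fun m => {l : List ℕ // IsComposition m l ∧ ArndtCond 2 3 l} with hG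
  have key : Nat.card (G n) = Nat.card (PUnit.{1} ⊕ Σ p : (Tn n), G (n - (p.1.1 + p.1.2))) := by
    apply Nat.card_congr
    refine (Equiv.ofBijective (fun x : PUnit.{1} ⊕ Σ p : (Tn n), G (n - (p.1.1 + p.1.2)) =>
      ?_) ⟨?_, ?_⟩).symm
    · rcases x with _ | ⟨⟨⟨c, d⟩, hp⟩, ⟨l, hl⟩⟩
      · exact ⟨[n], ⟨by intro y hy; simp at hy; omega, by simp⟩, arndt_single 2 3 n⟩
      · refine ⟨c :: d :: l, ⟨?_, ?_⟩, ?_⟩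
        · simp only [Tn, Finset.mem_filter, Finset.mem_product, Finset.mem_Icc] at hp
          intro y hy
          rcases List.mem_cons.mp hy with h | h
          · have : y = c := h; omega
          rcases List.mem_cons.mp h with h' | h'
          · have : y = d := h'; omega
          · exact hl.1.1 y h'
        · simp only [Tn, Finset.mem_filter, Finset.mem_product, Finset.mem_Icc] at hp
          have hsum' : l.sum = n - (c + d) := hl.1.2
          simp only [List.sum_cons, hsum']
          omega
        · have hp' := hp
          simp only [Tn, Finset.mem_filter, Finset.mem_product, Finset.mem_Icc] at hp'
          exact (arndt_cons_cons 2 3 c d l).mpr ⟨hp'.2.1, hl.2⟩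
    · rintro (⟨⟩ | ⟨⟨⟨c, d⟩, hp⟩, ⟨l, hl⟩⟩) (⟨⟩ | ⟨⟨⟨c', d'⟩, hp'⟩, ⟨l', hl'⟩⟩) h
      · rfl
      · have := congrArg (fun z => (Subtype.val z).length) h; simp at this
      · have := congrArg (fun z => (Subtype.val z).length) h; simp at this
      · have h' : c :: d :: l = c' :: d' :: l' := congrArg Subtype.val h
        simp only [List.cons.injEq] at h'
        obtain ⟨h1, h2, h3⟩ := h'
        subst h1; subst h2; subst h3; rfl
    · rintro ⟨l, ⟨hpos, hsum⟩, harndt⟩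
      match l with
      | [] => exfalso; simp at hsum; omega
      | [a] =>
        refine ⟨Sum.inl PUnit.unit, ?_⟩
        have : a = n := by simpa using hsum
        subst this; rfl
      | a :: d :: t =>
        have h0 : 3 * d < 2 * a := (arndt_cons_cons 2 3 a d t).mp harndt |>.1
        have ht : ArndtCond 2 3 t := ((arndt_cons_cons 2 3 a d t).mp harndt).2
        have hs : a + (d + t.sum) = n := by simpa using hsum
        have hmem : (a, d) ∈ Tn n := by
          simp only [Tn, Finset.mem_filter, Finset.mem_product, Finset.mem_Icc]
          have ha := hpos a (by simp)
          have hd := hpos d (by simp)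
          exact ⟨⟨⟨ha, by omega⟩, ⟨hd, by omega⟩⟩, h0, by omega⟩
        refine ⟨Sum.inr ⟨⟨(a, d), hmem⟩, ⟨t, ⟨fun y hy => hpos y (by simp [hy]), ?_⟩, ht⟩⟩, rfl⟩
        show t.sum = n - (a + d)
        omega
  have step2 : Nat.card (PUnit.{1} ⊕ Σ p : (Tn n), G (n - (p.1.1 + p.1.2)))
      = 1 + ∑ p ∈ Tn n, arndtCount 2 3 (n - (p.1 + p.2)) := by
    rw [Nat.card_sum]
    congr 1
    · simp
    letI : ∀ p : (Tn n), Fintype (G (n - (p.1.1 + p.1.2))) := fun p => Fintype.ofFinite _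
    rw [Nat.card_eq_fintype_card, Fintype.card_sigma]
    rw [← Finset.sum_coe_sort (Tn n) (fun p => arndtCount 2 3 (n - (p.1 + p.2)))]
    congr 1
    ext p
    rw [arndtCount, Nat.card_eq_fintype_card]
  rw [arndtCount, key, step2]

lemma Tn_zero : Tn 0 = ∅ := by
  ext p; rw [mem_Tn]; simp; omega

lemma a_rec' (n : ℕ) :
    arndtCount 2 3 n = 1 + ∑ p ∈ Tn n, arndtCount 2 3 (n - (p.1 + p.2)) := by
  rcases Nat.eq_zero_or_pos n with rfl | hn
  · rw [Tn_zero, Finset.sum_empty, arndtCount, comp_zero_unique _ (arndt_nil 2 3)]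
    omega
  · exact a_rec n hn

lemma sum_Tn_split (f : ℕ → ℕ) (n : ℕ) (hn : 1 ≤ n) :
    ∑ p ∈ Tn n, f (p.1 + p.2) =
      ∑ p ∈ Tn (n - 1), f (p.1 + p.2 + 1) + ∑ m ∈ Mn n, f m := by
  classical
  rw [← Finset.sum_filter_add_sum_filter_not (Tn n) (fun p => 3 * p.2 + 2 < 2 * p.1)]
  congr 1
  · -- big pairs ↔ Tn (n-1) via c ↦ c - 1
    refine Finset.sum_nbij' (fun p => (p.1 - 1, p.2)) (fun p => (p.1 + 1, p.2))
      ?_ ?_ ?_ ?_ ?_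
    · rintro ⟨a, b⟩ hp
      simp only [Finset.mem_filter, mem_Tn] at hp ⊢
      omega
    · rintro ⟨a, b⟩ hp
      simp only [Finset.mem_filter, mem_Tn] at hp ⊢
      omega
    · rintro ⟨a, b⟩ hp
      simp only [Finset.mem_filter, mem_Tn] at hp
      show (a - 1 + 1, b) = (a, b)
      have h : a - 1 + 1 = a := by omega
      rw [h]
    · rintro ⟨a, b⟩ hp
      simp only [mem_Tn] at hp
      show (a + 1 - 1, b) = (a, b)
      norm_num
    · rintro ⟨a, b⟩ hp
      simp only [Finset.mem_filter, mem_Tn] at hp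
      simp only
      congr 1
      omega
  · -- boundary pairs ↔ Mn n via (c,d) ↦ c + d
    refine Finset.sum_nbij' (fun p => p.1 + p.2)
      (fun m => if m % 5 = 3 then (3 * (m / 5) + 2, 2 * (m / 5) + 1)
                else (3 * (m / 5) + 1, 2 * (m / 5))) ?_ ?_ ?_ ?_ ?_
    · rintro ⟨a, b⟩ hp
      simp only [Finset.mem_filter, mem_Tn, not_lt] at hp
      rw [mem_Mn]
      simp only at hp ⊢
      omega
    · intro m hm
      rw [mem_Mn] at hm
      by_cases h3 : m % 5 = 3 <;>
        simp only [h3, if_true, if_false, reduceCtorEq, Finset.mem_filter, mem_Tn, not_lt] <;>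
        omega
    · rintro ⟨a, b⟩ hp
      simp only [Finset.mem_filter, mem_Tn, not_lt] at hp
      simp only at hp ⊢
      by_cases h3 : (a + b) % 5 = 3 <;> simp only [h3, if_true, if_false] <;>
        · simp only [Prod.mk.injEq]; omega
    · intro m hm
      rw [mem_Mn] at hm
      by_cases h3 : m % 5 = 3 <;> simp only [h3, if_true, if_false] <;> omega
    · intro p hp; rfl

lemma An_split (n : ℕ) (hn : 1 ≤ n) : An n = insert 1 (Mn n) := by
  ext q
  simp only [mem_An, mem_Mn, Finset.mem_insert]
  omega

lemma Mn_split (f : ℕ → ℕ) (n : ℕ) :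
    ∑ m ∈ Mn n, f m = (if 3 ≤ n then f 3 else 0) + ∑ q ∈ An (n - 5), f (q + 5) := by
  classical
  by_cases h3 : 3 ≤ n
  · have hMn : Mn n = insert 3 ((An (n - 5)).image (· + 5)) := by
      ext m
      simp only [mem_Mn, Finset.mem_insert, Finset.mem_image, mem_An]
      constructor
      · rintro ⟨hm3, hmn, hA⟩
        by_cases hm : m = 3
        · left; exact hm
        · right; exact ⟨m - 5, by omega, by omega⟩
      · rintro (rfl | ⟨q, ⟨hq1, hqn, hqA⟩, rfl⟩)
        · omega
        · omega
    rw [hMn, Finset.sum_insert, Finset.sum_image, if_pos h3]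
    · intro x _ y _ h; simp only at h; omega
    · simp only [Finset.mem_image, mem_An]
      rintro ⟨q, ⟨hq, _, _⟩, hq5⟩
      omega
  · have h1 : Mn n = ∅ := by
      ext m; simp only [mem_Mn, Finset.notMem_empty, iff_false]; omega
    have h2 : An (n - 5) = ∅ := by
      ext q; simp only [mem_An, Finset.notMem_empty, iff_false]; omega
    simp [h1, h2, h3]

lemma one_not_mem_Mn (n : ℕ) : 1 ∉ Mn n := by
  rw [mem_Mn]; omega

theorem arndt_2_3_eq (n : ℕ) :
    arndtCount 2 3 n = compCount {x : ℕ | x % 5 = 1 ∨ x % 5 = 3} n := by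
  show arndtCount 2 3 n = compCount Aset n
  induction n using Nat.strong_induction_on with
  | _ n ih =>
  rcases Nat.eq_zero_or_pos n with rfl | hn
  · rw [arndtCount, comp_zero_unique _ (arndt_nil 2 3),
      compCount, comp_zero_unique _ (by intro x hx; simp at hx)]
  · -- a side
    have ha1 : arndtCount 2 3 n
        = 1 + (∑ p ∈ Tn (n - 1), arndtCount 2 3 (n - (p.1 + p.2 + 1))
            + ∑ m ∈ Mn n, arndtCount 2 3 (n - m)) := by
      rw [a_rec' n]
      congr 1
      exact sum_Tn_split (fun s => arndtCount 2 3 (n - s)) n hn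
    have hsub : ∀ x : ℕ, n - (x + 1) = n - 1 - x := fun x => by omega
    have ha2 : arndtCount 2 3 n
        = arndtCount 2 3 (n - 1) + ∑ m ∈ Mn n, arndtCount 2 3 (n - m) := by
      have hc : ∑ p ∈ Tn (n - 1), arndtCount 2 3 (n - (p.1 + p.2 + 1))
          = ∑ p ∈ Tn (n - 1), arndtCount 2 3 (n - 1 - (p.1 + p.2)) :=
        Finset.sum_congr rfl fun p _ => by rw [hsub]
      rw [ha1, hc, a_rec' (n - 1)]
      ring
    have ha3 : arndtCount 2 3 n
        = arndtCount 2 3 (n - 1) + ((if 3 ≤ n then arndtCount 2 3 (n - 3) else 0)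
            + ∑ q ∈ An (n - 5), arndtCount 2 3 (n - (q + 5))) := by
      rw [ha2]
      congr 1
      exact Mn_split (fun m => arndtCount 2 3 (n - m)) n
    -- b side
    have hb1 : compCount Aset n
        = compCount Aset (n - 1) + ((if 3 ≤ n then compCount Aset (n - 3) else 0)
            + ∑ q ∈ An (n - 5), compCount Aset (n - (q + 5))) := by
      rw [b_rec n hn, An_split n hn, Finset.sum_insert (one_not_mem_Mn n)]
      congr 1
      exact Mn_split (fun m => compCount Aset (n - m)) n
    rw [ha3, hb1, ih (n - 1) (by omega)]
    congr 1
    congr 1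
    · by_cases h3 : 3 ≤ n
      · rw [if_pos h3, if_pos h3, ih (n - 3) (by omega)]
      · rw [if_neg h3, if_neg h3]
    · exact Finset.sum_congr rfl fun q hq => ih (n - (q + 5)) (by omega)
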